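/- Let V be a finite-dimensional semisimple module over an F-algebra A with |F| > dim V, with basis v₁,…,vₙ. If elements u₁,…,u_ℓ ∈ V generate a submodule that is not of maximum dimension among submodules generated by at most ℓ elements, then there exist indices i ∈ [ℓ], j ∈ [n] such that for all but at most n scalars ω ∈ F, replacing uᵢ by uᵢ + ω vⱼ yields a strictly larger-dimensional generated submodule. -/

import Mathlib

open Module Submodule LinearMap Polynomial

section Pencil

variable {F E V : Type*} [Field F] [AddCommGroup E] [Module F E] [AddCommGroup V]
    [Module F V] [FiniteDimensional F V]

/-- Pencil lemma: if `φ q = 0` and `ψ q ∉ range φ`, then for all but at most `finrank F V`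
scalars `ω`, the rank of `φ + ω • ψ` exceeds that of `φ`. -/
theorem pencil_lemma (φ ψ : E →ₗ[F] V) (q : E) (hq : φ q = 0)
    (hψ : ψ q ∉ LinearMap.range φ) :
    ∃ bad : Finset F, bad.card ≤ finrank F V ∧ ∀ ω ∉ bad,
      finrank F (LinearMap.range φ) < finrank F (LinearMap.range (φ + ω • ψ)) := by
  classical
  set n := finrank F V with hn
  set R := LinearMap.range φ with hRdef
  set r := finrank F R with hr
  have hrn : r < n := Submodule.finrank_lt (
    (fun (h : R = ⊤) => hψ (by rw [h]; exact Submodule.mem_top)))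
  let b : Basis (Fin r) F R := Module.finBasis F R
  have hp : ∀ i : Fin r, ∃ e : E, φ e = (b i : V) := fun i => (b i).2
  choose p hp using hp
  let w : Fin (r+1) → V := Fin.snoc (fun i => (b i : V)) (ψ q)
  have hbi : LinearIndependent F (fun i => (b i : V)) :=
    b.linearIndependent.map' R.subtype R.ker_subtype
  have hspanb : Submodule.span F (Set.range fun i => (b i : V)) = R := by
    rw [show (fun i => (b i : V)) = R.subtype ∘ b from rfl, Set.range_comp,
      ← Submodule.map_span, b.span_eq, Submodule.map_top, Submodule.range_subtype]
  have hw : LinearIndependent F w :=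
    linearIndependent_fin_snoc.mpr ⟨hbi, by rw [hspanb]; exact hψ⟩
  set G := Submodule.span F (Set.range w) with hGdef
  let bG : Basis (Fin (r+1)) F G := Basis.span hw
  obtain ⟨Gc, hGc⟩ := Submodule.exists_isCompl G
  let projG := Submodule.projectionOnto G Gc hGc
  let g : V →ₗ[F] (Fin (r+1) → F) := (bG.equivFun : G ≃ₗ[F] _).toLinearMap ∘ₗ projG
  have hgw : ∀ s, g (w s) = Pi.single s (1:F) := by
    intro s
    have hmem : w s ∈ G := Submodule.subset_span (Set.mem_range_self s)
    have h1 : projG (w s) = bG s := by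
      have h2 : projG (w s) = ⟨w s, hmem⟩ :=
        Submodule.projectionOnto_apply_left hGc ⟨w s, hmem⟩
      rw [h2]
      exact (Basis.span_apply hw s).symm
    show bG.equivFun (projG (w s)) = _
    rw [h1]
    ext j
    rw [Basis.equivFun_self]
    simp [Pi.single_apply, eq_comm]
  have hgφp : ∀ t' : Fin r, g (φ (p t')) = Pi.single (Fin.castSucc t') (1:F) := by
    intro t'
    have hwc : w (Fin.castSucc t') = (b t' : V) := by simp [w]
    rw [hp t', ← hwc]
    exact hgw _
  have hgψq : g (ψ q) = Pi.single (Fin.last r) (1:F) := by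
    have hwl : w (Fin.last r) = ψ q := by simp [w]
    rw [← hwl]
    exact hgw _
  set M : Matrix (Fin (r+1)) (Fin (r+1)) (Polynomial F) :=
    Matrix.of fun s t => Fin.lastCases (Polynomial.C (g (ψ q) s))
      (fun t' => Polynomial.C (g (φ (p t')) s) + Polynomial.X * Polynomial.C (g (ψ (p t')) s)) t
    with hMdef
  set D := M.det with hDdef
  have hM0 : M.map (Polynomial.evalRingHom (0:F)) = 1 := by
    ext s t
    induction t using Fin.lastCases with
    | last =>
      simp only [Matrix.map_apply, hMdef, Matrix.of_apply, Fin.lastCases_last, coe_evalRingHom,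
        eval_C]
      rw [hgψq, Matrix.one_apply]
      simp [Pi.single_apply, eq_comm]
    | cast t' =>
      simp only [Matrix.map_apply, hMdef, Matrix.of_apply, Fin.lastCases_castSucc,
        coe_evalRingHom, eval_add, eval_C, eval_mul, eval_X, zero_mul, add_zero]
      rw [hgφp, Matrix.one_apply]
      simp [Pi.single_apply, eq_comm]
  have hD0 : D.eval 0 = 1 := by
    have h := RingHom.map_det (Polynomial.evalRingHom (0:F)) M
    rw [RingHom.mapMatrix_apply, hM0] at h
    simpa using h
  have hDne : D ≠ 0 := fun h => by simp [h] at hD0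
  have hdeg : D.natDegree ≤ r := by
    rw [hDdef, Matrix.det_apply]
    apply Polynomial.natDegree_sum_le_of_forall_le
    intro σ _
    have hsmul : ∀ (ε : ℤˣ) (P : Polynomial F), (ε • P).natDegree ≤ P.natDegree := by
      intro ε P
      rcases Int.units_eq_one_or ε with h | h <;> rw [h]
      · rw [one_smul]
      · rw [Units.neg_smul, one_smul, natDegree_neg]
    refine le_trans (hsmul _ _) (le_trans (Polynomial.natDegree_prod_le _ _) ?_)
    have hentry : ∀ s t, (M s t).natDegree ≤ (Fin.lastCases 0 (fun _ => 1) t : ℕ) := by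
      intro s t
      induction t using Fin.lastCases with
      | last => simp [hMdef]
      | cast t' =>
        simp only [hMdef, Matrix.of_apply, Fin.lastCases_castSucc]
        refine le_trans (Polynomial.natDegree_add_le _ _) ?_
        simp only [natDegree_C, max_le_iff]
        refine ⟨Nat.zero_le _, le_trans (Polynomial.natDegree_mul_le) ?_⟩
        simp
    refine le_trans (Finset.sum_le_sum (fun s _ => hentry (σ s) s)) ?_
    rw [Fin.sum_univ_castSucc]
    simp
  refine ⟨insert (0:F) D.roots.toFinset, ?_, ?_⟩
  · refine le_trans (Finset.card_insert_le _ _) ?_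
    have h1 : D.roots.toFinset.card ≤ D.natDegree :=
      le_trans (Multiset.toFinset_card_le _) (Polynomial.card_roots' D)
    omega
  · intro ω hω
    have hω0 : ω ≠ 0 := fun h => hω (h ▸ Finset.mem_insert_self _ _)
    have hωroot : D.eval ω ≠ 0 := by
      intro h
      exact hω (Finset.mem_insert_of_mem (Multiset.mem_toFinset.mpr
        (Polynomial.mem_roots'.mpr ⟨hDne, h⟩)))
    set Mw : Matrix (Fin (r+1)) (Fin (r+1)) F := M.map (Polynomial.evalRingHom ω) with hMw
    have hdet : Mw.det ≠ 0 := by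
      have h := RingHom.map_det (Polynomial.evalRingHom ω) M
      rw [RingHom.mapMatrix_apply] at h
      rw [hMw, ← h]
      simpa using hωroot
    have hcols : LinearIndependent F (fun t s' => Mw s' t) := by
      rw [Fintype.linearIndependent_iff]
      intro c hc t
      have hmv : Mw.mulVec c = 0 := by
        funext s
        have h := congrFun hc s
        simp only [Finset.sum_apply, Pi.smul_apply, smul_eq_mul, Pi.zero_apply] at h
        show ∑ i, Mw s i * c i = 0
        rw [← h]
        exact Finset.sum_congr rfl fun t _ => mul_comm _ _
      exact congrFun (Matrix.eq_zero_of_mulVec_eq_zero hdet hmv) t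
    set y' : Fin (r+1) → V := Fin.snoc (fun t' => (φ + ω • ψ) (p t')) (ψ q) with hy'def
    have hgy' : (fun t => g (y' t)) = (fun t s' => Mw s' t) := by
      funext t
      induction t using Fin.lastCases with
      | last =>
        have h1 : y' (Fin.last r) = ψ q := Fin.snoc_last _ _
        funext s'
        have h2 : Mw s' (Fin.last r) = g (ψ q) s' := by
          rw [hMw, Matrix.map_apply, hMdef]
          show Polynomial.eval ω (Fin.lastCases (C (g (ψ q) s')) _ (Fin.last r)) = _
          rw [Fin.lastCases_last, eval_C]
        rw [h1, h2]
      | cast t' =>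
        have h1 : y' (Fin.castSucc t') = (φ + ω • ψ) (p t') := Fin.snoc_castSucc _ _ _
        funext s'
        have h2 : Mw s' (Fin.castSucc t') = g (φ (p t')) s' + ω * g (ψ (p t')) s' := by
          rw [hMw, Matrix.map_apply, hMdef]
          show Polynomial.eval ω (Fin.lastCases _
            (fun t'' => C (g (φ (p t'')) s') + X * C (g (ψ (p t'')) s')) (Fin.castSucc t')) = _
          rw [Fin.lastCases_castSucc, eval_add, eval_C, eval_mul, eval_X, eval_C]
        rw [h1, h2]
        show g (φ (p t') + ω • ψ (p t')) s' = _
        rw [map_add, map_smul]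
        simp [mul_comm]
    have hy' : LinearIndependent F y' := by
      apply LinearIndependent.of_comp g
      show LinearIndependent F (⇑g ∘ y')
      rw [show ⇑g ∘ y' = (fun t s' => Mw s' t) from hgy']
      exact hcols
    set scal : Fin (r+1) → Fˣ := fun t => if t = Fin.last r then Units.mk0 ω hω0 else 1
      with hscal
    have hy : LinearIndependent F (scal • y') := hy'.units_smul scal
    set y : Fin (r+1) → V := Fin.snoc (fun t' => (φ + ω • ψ) (p t')) ((φ + ω • ψ) q) with hydef
    have hyy : scal • y' = y := by
      funext t
      induction t using Fin.lastCases with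
      | last =>
        show (scal (Fin.last r) : F) • y' (Fin.last r) = y (Fin.last r)
        simp only [hscal, if_pos rfl, Units.val_mk0, hy'def, hydef, Fin.snoc_last]
        rw [LinearMap.add_apply, hq, zero_add]
        rfl
      | cast t' =>
        show (scal (Fin.castSucc t') : F) • y' (Fin.castSucc t') = y (Fin.castSucc t')
        have hne : Fin.castSucc t' ≠ Fin.last r := Fin.ne_of_lt (Fin.castSucc_lt_last t')
        simp [hscal, if_neg hne, hy'def, hydef]
    have hyind : LinearIndependent F y := hyy ▸ hy
    have hysub : ∀ t, y t ∈ LinearMap.range (φ + ω • ψ) := by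
      intro t
      induction t using Fin.lastCases with
      | last =>
        rw [show y (Fin.last r) = (φ + ω • ψ) q from by simp [hydef]]
        exact LinearMap.mem_range_self _ q
      | cast t' =>
        rw [show y (Fin.castSucc t') = (φ + ω • ψ) (p t') from by simp [hydef]]
        exact LinearMap.mem_range_self _ (p t')
    have hspan : Submodule.span F (Set.range y) ≤ LinearMap.range (φ + ω • ψ) := by
      rw [Submodule.span_le]
      rintro x ⟨t, rfl⟩
      exact hysub t
    have hcard : finrank F (Submodule.span F (Set.range y)) = r + 1 := by
      rw [finrank_span_eq_card hyind, Fintype.card_fin]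
    have hfin : r + 1 ≤ finrank F (LinearMap.range (φ + ω • ψ)) := by
      rw [← hcard]
      exact Submodule.finrank_mono hspan
    omega

end Pencil

section Aux

variable {F A : Type*} [Field F] [Ring A] [Algebra F A]
variable {V : Type*} [AddCommGroup V] [Module A V] [Module F V] [IsScalarTower F A V]

theorem smulFA (c : F) (a : A) (x : V) : a • (c • x) = c • (a • x) := by
  have h1 : c • x = (c • (1:A)) • x := by rw [smul_assoc, one_smul]
  rw [h1, ← mul_smul, mul_smul_comm, mul_one, smul_assoc]

variable (ℓ : ℕ)

/-- The linear map `(a₁,…,a_ℓ) ↦ ∑ aₖ • tₖ`, as an `F`-linear map. -/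
noncomputable def phiMap (F A : Type*) [Field F] [Ring A] [Algebra F A]
    {V : Type*} [AddCommGroup V] [Module A V] [Module F V] [IsScalarTower F A V]
    (ℓ : ℕ) (t : Fin ℓ → V) : (Fin ℓ → A) →ₗ[F] V where
  toFun := fun a => ∑ k, a k • t k
  map_add' := by
    intro a a'
    show ∑ k, (a + a') k • t k = (∑ k, a k • t k) + ∑ k, a' k • t k
    rw [← Finset.sum_add_distrib]
    exact Finset.sum_congr rfl fun k _ => by rw [Pi.add_apply, add_smul]
  map_smul' := by
    intro c a
    show ∑ k, (c • a) k • t k = c • ∑ k, a k • t k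
    rw [Finset.smul_sum]
    exact Finset.sum_congr rfl fun k _ => by rw [Pi.smul_apply, smul_assoc]

theorem phiMap_apply (t : Fin ℓ → V) (a : Fin ℓ → A) :
    phiMap F A ℓ t a = ∑ k, a k • t k := rfl

theorem range_phiMap (t : Fin ℓ → V) :
    LinearMap.range (phiMap F A ℓ t) = (Submodule.span A (Set.range t)).restrictScalars F := by
  ext x
  rw [LinearMap.mem_range, Submodule.restrictScalars_mem, mem_span_range_iff_exists_fun]
  constructor
  · rintro ⟨a, rfl⟩; exact ⟨a, rfl⟩
  · rintro ⟨a, rfl⟩; exact ⟨a, rfl⟩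

theorem piSemisimple [IsSemisimpleModule A V] (t : ℕ) :
    IsSemisimpleModule A (Fin t → V) := by
  classical
  apply isSemisimpleModule_of_isSemisimpleModule_submodule'
    (p := fun m => LinearMap.range (LinearMap.single A (fun _ : Fin t => V) m))
  · intro m
    have hinj : Function.Injective (LinearMap.single A (fun _ : Fin t => V) m) := by
      intro x y h
      have := congrFun h m
      simpa using this
    exact IsSemisimpleModule.congr (LinearEquiv.ofInjective _ hinj).symm
  · rw [eq_top_iff]
    intro x _
    have hx : x = ∑ m, Pi.single m (x m) := by
      funext j
      rw [Finset.sum_apply]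
      simp [Pi.single_apply]
    rw [hx]
    exact Submodule.sum_mem _ fun m _ =>
      Submodule.mem_iSup_of_mem m ⟨x m, by simp [LinearMap.single_apply]⟩

/-- Mini Jacobson-density-style lemma: an `A`-linear endomorphism commuting with all
`A`-linear endomorphisms agrees with multiplication by some `b : A` on any finite set. -/
theorem density [IsSemisimpleModule A V] (π : V →ₗ[A] V)
    (hπ : ∀ (e : V →ₗ[A] V) (x : V), π (e x) = e (π x)) (t : ℕ) (w : Fin t → V) :
    ∃ b : A, ∀ m, b • w m = π (w m) := by
  classical
  haveI : IsSemisimpleModule A (Fin t → V) := piSemisimple (A := A) (V := V) t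
  obtain ⟨Q, hQ⟩ := exists_isCompl (Submodule.span A {w})
  let ρ0 := Submodule.linearProjOfIsCompl _ Q hQ
  let ρ : (Fin t → V) →ₗ[A] (Fin t → V) := (Submodule.span A {w}).subtype ∘ₗ ρ0
  let comp : Fin t → Fin t → (V →ₗ[A] V) := fun p' q' =>
    (LinearMap.proj p') ∘ₗ ρ ∘ₗ (LinearMap.single A (fun _ : Fin t => V) q')
  have hρ : ∀ (x : Fin t → V) (p' : Fin t), ρ x p' = ∑ q', comp p' q' (x q') := by
    intro x p'
    have hx : x = ∑ q', (LinearMap.single A (fun _ : Fin t => V) q') (x q') := by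
      funext j
      rw [Finset.sum_apply]
      simp [LinearMap.single_apply, Pi.single_apply]
    conv_lhs => rw [hx]
    rw [map_sum, Finset.sum_apply]
    rfl
  let Pi' : (Fin t → V) →ₗ[A] (Fin t → V) := LinearMap.pi (fun p' => π ∘ₗ LinearMap.proj p')
  have hPi'app : ∀ (x : Fin t → V) (p' : Fin t), Pi' x p' = π (x p') := fun x p' => rfl
  have hcomm : ∀ x, Pi' (ρ x) = ρ (Pi' x) := by
    intro x
    funext p'
    rw [hPi'app, hρ, hρ, map_sum]
    exact Finset.sum_congr rfl fun q' _ => by rw [hπ (comp p' q') (x q'), hPi'app]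
  have hρw : ρ w = w := by
    have hmem : w ∈ Submodule.span A {w} := Submodule.mem_span_singleton_self w
    show ((ρ0 w : Submodule.span A {w}) : Fin t → V) = w
    rw [show ρ0 w = ⟨w, hmem⟩ from Submodule.linearProjOfIsCompl_apply_left hQ ⟨w, hmem⟩]
  have hmem2 : Pi' w ∈ Submodule.span A {w} := by
    have h1 : Pi' w = ρ (Pi' w) := by rw [← hcomm, hρw]
    rw [h1]
    exact (ρ0 (Pi' w)).2
  obtain ⟨b, hb⟩ := Submodule.mem_span_singleton.mp hmem2
  refine ⟨b, fun m => ?_⟩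
  have := congrFun hb m
  rw [Pi.smul_apply] at this
  rw [this, hPi'app]

end Aux

section ML

universe v

variable {F A : Type*} [Field F] [Ring A] [Algebra F A] [FiniteDimensional F A]

theorem mainLemma (ℓ : ℕ) (N : ℕ) :
    ∀ (V : Type v) [AddCommGroup V] [Module A V] [Module F V] [IsScalarTower F A V]
      [FiniteDimensional F V] [IsSemisimpleModule A V],
      finrank F V ≤ N → ∀ u u' : Fin ℓ → V,
      finrank F (LinearMap.range (phiMap F A ℓ u)) <
        finrank F (LinearMap.range (phiMap F A ℓ u')) →
      ∃ a : Fin ℓ → A, (∑ m, a m • u m = 0) ∧ ∃ (k : Fin ℓ) (x : V),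
        a k • x ∉ Submodule.span A (Set.range u) := by
  induction N with
  | zero =>
    intro V _ _ _ _ _ _ hle u u' hlt
    exfalso
    have h1 : finrank F (LinearMap.range (phiMap F A ℓ u')) ≤ finrank F V :=
      Submodule.finrank_le _
    omega
  | succ N ih =>
    intro V _ _ _ _ _ _ hle u u' hlt
    by_contra hcon
    push_neg at hcon
    -- hcon : ∀ a, (∑ m, a m • u m = 0) → ∀ k x, a k • x ∈ span A (range u)
    by_cases hc : ∀ a : Fin ℓ → A, (∑ m, a m • u m = 0) → ∀ (k : Fin ℓ) (y : V), a k • y = 0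
    · -- then ker (phiMap u) ≤ ker (phiMap u'), contradicting the rank inequality
      have hker : LinearMap.ker (phiMap F A ℓ u) ≤ LinearMap.ker (phiMap F A ℓ u') := by
        intro a ha
        rw [LinearMap.mem_ker, phiMap_apply] at ha ⊢
        exact Finset.sum_eq_zero fun m _ => hc a ha m (u' m)
      have h1 := LinearMap.finrank_range_add_finrank_ker (phiMap F A ℓ u)
      have h2 := LinearMap.finrank_range_add_finrank_ker (phiMap F A ℓ u')
      have h3 : finrank F (LinearMap.ker (phiMap F A ℓ u)) ≤
          finrank F (LinearMap.ker (phiMap F A ℓ u')) := Submodule.finrank_mono hker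
      omega
    · push_neg at hc
      obtain ⟨ahat, hahat, khat, yhat, hyhat⟩ := hc
      set W : Submodule A V := Submodule.span A (Set.range u) with hWdef
      -- the ideal-like set I and the submodules IV, VI
      set I : Set A := {c | ∀ x : V, c • x ∈ W} with hIdef
      have hIr : ∀ c ∈ I, ∀ a : A, c * a ∈ I := by
        intro c hc' a x
        rw [mul_smul]; exact hc' (a • x)
      have hIk : ∀ a : Fin ℓ → A, (∑ m, a m • u m = 0) → ∀ k, a k ∈ I := by
        intro a ha k x
        exact hcon a ha k x
      set IV : Submodule A V := Submodule.span A {y | ∃ c ∈ I, ∃ x : V, c • x = y} with hIVdef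
      have hIVle : IV ≤ W := by
        rw [hIVdef, Submodule.span_le]
        rintro y ⟨c, hc', x, rfl⟩
        exact hc' x
      have hximem : ahat khat • yhat ∈ IV :=
        Submodule.subset_span ⟨ahat khat, hIk ahat hahat khat, yhat, rfl⟩
      set VI : Submodule A V :=
        { carrier := {x : V | ∀ c ∈ I, c • x = 0}
          add_mem' := fun hx hy => by
            intro c hc'
            rw [smul_add, hx c hc', hy c hc', add_zero]
          zero_mem' := fun c _ => smul_zero c
          smul_mem' := by
            intro a x hx c hc'
            rw [← mul_smul]
            exact hx (c * a) (hIr c hc' a) } with hVIdef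
      have hmemVI : ∀ x : V, x ∈ VI ↔ ∀ c ∈ I, c • x = 0 := fun x => Iff.rfl
      -- stability of IV and VI under A-linear endomorphisms
      have hstabIV : ∀ (e : V →ₗ[A] V), ∀ z ∈ IV, e z ∈ IV := by
        intro e z hz
        have hmap : Submodule.map e IV ≤ IV := by
          rw [hIVdef, Submodule.map_span, Submodule.span_le]
          rintro y' ⟨y, ⟨c, hc', x, rfl⟩, rfl⟩
          exact Submodule.subset_span ⟨c, hc', e x, by rw [map_smul]⟩
        exact hmap ⟨z, hz, rfl⟩
      have hstabVI : ∀ (e : V →ₗ[A] V), ∀ y ∈ VI, e y ∈ VI := by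
        intro e y hy c hc'
        rw [← map_smul, hy c hc', map_zero]
      -- IV and VI are complementary
      have hdisj : IV ⊓ VI = ⊥ := by
        obtain ⟨P, hP⟩ := exists_isCompl (IV ⊓ VI)
        have hIVP : IV ≤ P := by
          rw [hIVdef, Submodule.span_le]
          rintro y ⟨c, hc', x, rfl⟩
          obtain ⟨z1, hz1, z2, hz2, rfl⟩ :=
            Submodule.mem_sup.mp (hP.sup_eq_top ▸ Submodule.mem_top (x := x))
          rw [smul_add, (Submodule.mem_inf.mp hz1).2 c hc', zero_add]
          exact P.smul_mem c hz2
        rw [eq_bot_iff]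
        intro x hx
        exact hP.disjoint.le_bot ⟨hx, hIVP (Submodule.mem_inf.mp hx).1⟩
      have hsup : IV ⊔ VI = ⊤ := by
        obtain ⟨Q, hQ⟩ := exists_isCompl IV
        have hQVI : Q ≤ VI := by
          intro q hq c hc'
          have h1 : c • q ∈ IV := Submodule.subset_span ⟨c, hc', q, rfl⟩
          have h2 : c • q ∈ Q := Q.smul_mem c hq
          simpa using hQ.disjoint.le_bot ⟨h1, h2⟩
        rw [← top_le_iff, ← hQ.sup_eq_top]
        exact sup_le_sup_left hQVI IV
      have hcompl : IsCompl IV VI := ⟨disjoint_iff.mpr hdisj, codisjoint_iff.mpr hsup⟩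
      -- the projection onto VI along IV
      set π₀ : V →ₗ[A] ↥VI := Submodule.projectionOnto VI IV hcompl.symm with hπ₀def
      set π : V →ₗ[A] V := VI.subtype ∘ₗ π₀ with hπdef
      have hπ₀IV : ∀ z ∈ IV, π₀ z = 0 := fun z hz =>
        Submodule.projectionOnto_apply_right hcompl.symm ⟨z, hz⟩
      have hπ₀VI : ∀ (y : ↥VI), π₀ ↑y = y := fun y =>
        Submodule.projectionOnto_apply_left hcompl.symm y
      have hπcomm : ∀ (e : V →ₗ[A] V) (x : V), π (e x) = e (π x) := by
        intro e x
        obtain ⟨z, hz, y, hy, rfl⟩ :=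
          Submodule.mem_sup.mp (hsup ▸ Submodule.mem_top (x := x))
        have h1 : π (z + y) = y := by
          rw [hπdef, LinearMap.comp_apply, map_add, hπ₀IV z hz,
            hπ₀VI ⟨y, hy⟩, zero_add]
          rfl
        have h2 : π (e (z + y)) = e y := by
          rw [map_add e z y, hπdef, LinearMap.comp_apply, map_add,
            hπ₀IV _ (hstabIV e z hz), hπ₀VI ⟨e y, hstabVI e y hy⟩, zero_add]
          rfl
        rw [h1, h2]
      -- finite-dimensionality of VI
      let eVI : (↥(VI.restrictScalars F)) ≃ₗ[F] ↥VI :=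
        { toFun := fun x => ⟨x.1, x.2⟩
          map_add' := fun _ _ => rfl
          map_smul' := fun _ _ => rfl
          invFun := fun x => ⟨x.1, x.2⟩
          left_inv := fun _ => rfl
          right_inv := fun _ => rfl }
      haveI instFD : FiniteDimensional F ↥VI := Module.Finite.equiv eVI
      -- dimension bookkeeping
      have hsupF : (IV.restrictScalars F) ⊔ (VI.restrictScalars F) = ⊤ := by
        rw [eq_top_iff]
        intro x _
        obtain ⟨z, hz, y, hy, rfl⟩ :=
          Submodule.mem_sup.mp (hsup ▸ Submodule.mem_top (x := x))
        exact Submodule.mem_sup.mpr ⟨z, hz, y, hy, rfl⟩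
      have hinfF : (IV.restrictScalars F) ⊓ (VI.restrictScalars F) = ⊥ := by
        rw [eq_bot_iff]
        intro x hx
        have : x ∈ IV ⊓ VI := hx
        rw [hdisj] at this
        exact this
      have hdim : finrank F ↥(IV.restrictScalars F) + finrank F ↥(VI.restrictScalars F)
          = finrank F V := by
        have h := Submodule.finrank_sup_add_finrank_inf_eq
          (IV.restrictScalars F) (VI.restrictScalars F)
        rw [hsupF, hinfF, finrank_top, finrank_bot, add_zero] at h
        exact h.symm
      have hIVpos : 0 < finrank F ↥(IV.restrictScalars F) := by
        rw [Module.finrank_pos_iff_exists_ne_zero (R := F)]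
        refine ⟨⟨ahat khat • yhat, hximem⟩, ?_⟩
        intro h
        apply hyhat
        exact congrArg Subtype.val h
      have hVIle : finrank F ↥VI ≤ N := by
        have h1 : finrank F ↥(VI.restrictScalars F) = finrank F ↥VI := eVI.finrank_eq
        omega
      -- transfer the problem to VI
      set u₂ : Fin ℓ → ↥VI := fun m => π₀ (u m) with hu₂def
      set u₂' : Fin ℓ → ↥VI := fun m => π₀ (u' m) with hu₂'def
      set π₀F : V →ₗ[F] ↥VI := π₀.restrictScalars F with hπ₀Fdef
      have hphi₂ : ∀ t : Fin ℓ → V,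
          phiMap F A ℓ (fun m => π₀ (t m)) = π₀F ∘ₗ phiMap F A ℓ t := by
        intro t
        apply LinearMap.ext
        intro a
        rw [LinearMap.comp_apply, phiMap_apply, phiMap_apply]
        show _ = π₀ (∑ k, a k • t k)
        rw [map_sum]
        exact Finset.sum_congr rfl fun k _ => (map_smul π₀ (a k) (t k)).symm
      have hkerπ₀F : LinearMap.ker π₀F = IV.restrictScalars F := by
        rw [hπ₀Fdef, LinearMap.ker_restrictScalars, hπ₀def,
          Submodule.ker_projectionOnto]
      have hrank : ∀ t : Fin ℓ → V,
          finrank F ↥(LinearMap.range (phiMap F A ℓ t)) =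
            finrank F ↥(LinearMap.range (phiMap F A ℓ (fun m => π₀ (t m)))) +
            finrank F ↥(LinearMap.ker (π₀F ∘ₗ (LinearMap.range (phiMap F A ℓ t)).subtype)) := by
        intro t
        have h1 := LinearMap.finrank_range_add_finrank_ker
          (π₀F ∘ₗ (LinearMap.range (phiMap F A ℓ t)).subtype)
        have h2 : LinearMap.range (π₀F ∘ₗ (LinearMap.range (phiMap F A ℓ t)).subtype) =
            LinearMap.range (phiMap F A ℓ (fun m => π₀ (t m))) := by
          rw [hphi₂ t, LinearMap.range_comp, LinearMap.range_comp, Submodule.range_subtype]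
        rw [h2] at h1
        have h3 : finrank F ↥(LinearMap.range (phiMap F A ℓ t)) =
            finrank F ↥(⊤ : Submodule F ↥(LinearMap.range (phiMap F A ℓ t))) :=
          (finrank_top F _).symm
        omega
      -- for u, the kernel piece is all of IV
      have hIVleRu : IV.restrictScalars F ≤ LinearMap.range (phiMap F A ℓ u) := by
        rw [range_phiMap]
        intro x hx
        exact hIVle hx
      have hkeru : finrank F ↥(LinearMap.ker (π₀F ∘ₗ (LinearMap.range (phiMap F A ℓ u)).subtype))
          = finrank F ↥(IV.restrictScalars F) := by
        rw [LinearMap.ker_comp, hkerπ₀F]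
        exact (Submodule.comapSubtypeEquivOfLe hIVleRu).finrank_eq
      -- for u', the kernel piece is at most IV
      have hkeru' : finrank F ↥(LinearMap.ker (π₀F ∘ₗ (LinearMap.range (phiMap F A ℓ u')).subtype))
          ≤ finrank F ↥(IV.restrictScalars F) := by
        rw [LinearMap.ker_comp, hkerπ₀F]
        set q := LinearMap.range (phiMap F A ℓ u') with hqdef
        have heq : Submodule.comap q.subtype (IV.restrictScalars F) =
            Submodule.comap q.subtype ((IV.restrictScalars F) ⊓ q) := by
          apply le_antisymm
          · intro x hx
            exact Submodule.mem_comap.mpr ⟨Submodule.mem_comap.mp hx, x.2⟩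
          · intro x hx
            exact Submodule.mem_comap.mpr (Submodule.mem_comap.mp hx).1
        rw [heq]
        rw [(Submodule.comapSubtypeEquivOfLe (inf_le_right :
          (IV.restrictScalars F) ⊓ q ≤ q)).finrank_eq]
        exact Submodule.finrank_mono inf_le_left
      have hlt₂ : finrank F ↥(LinearMap.range (phiMap F A ℓ u₂)) <
          finrank F ↥(LinearMap.range (phiMap F A ℓ u₂')) := by
        have h1 := hrank u
        have h2 := hrank u'
        rw [hkeru] at h1
        rw [show (fun m => π₀ (u m)) = u₂ from rfl] at h1
        rw [show (fun m => π₀ (u' m)) = u₂' from rfl] at h2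
        omega
      -- apply the induction hypothesis in VI
      obtain ⟨a, harel, k, x₂, hx₂⟩ := ih ↥VI hVIle u₂ u₂' hlt₂
      -- use density to find b : A acting as π on the relevant vectors
      obtain ⟨b, hb⟩ := density π hπcomm (ℓ+1) (Fin.snoc u (↑x₂ : V))
      have hbu : ∀ m : Fin ℓ, b • u m = π (u m) := by
        intro m
        have h := hb (Fin.castSucc m)
        rwa [Fin.snoc_castSucc] at h
      have hbx : b • (↑x₂ : V) = ↑x₂ := by
        have h := hb (Fin.last ℓ)
        rw [Fin.snoc_last] at h
        rw [h, hπdef, LinearMap.comp_apply, hπ₀VI x₂]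
        rfl
      -- construct the contradicting relation
      set a' : Fin ℓ → A := fun m => a m * b with ha'def
      have ha'rel : ∑ m, a' m • u m = 0 := by
        have h1 : ∀ m : Fin ℓ, a' m • u m = a m • ((π₀ (u m) : ↥VI) : V) := by
          intro m
          rw [ha'def, mul_smul, hbu m, hπdef, LinearMap.comp_apply]
          rfl
        calc ∑ m, a' m • u m = ∑ m, a m • ((u₂ m : ↥VI) : V) := by
              exact Finset.sum_congr rfl fun m _ => h1 m
          _ = ((∑ m, a m • u₂ m : ↥VI) : V) := by
              rw [Submodule.coe_sum]
              exact Finset.sum_congr rfl fun m _ => rfl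
          _ = 0 := by rw [harel]; rfl
      have hfinal : a' k • (↑x₂ : V) ∉ W := by
        intro hmem
        apply hx₂
        have h1 : a' k • (↑x₂ : V) = ((a k • x₂ : ↥VI) : V) := by
          rw [ha'def, mul_smul, hbx]
          rfl
        have h2 : Submodule.map π₀ W = Submodule.span A (Set.range u₂) := by
          rw [hWdef, Submodule.map_span, ← Set.range_comp]
          rfl
        have h3 : π₀ (a' k • (↑x₂ : V)) ∈ Submodule.map π₀ W :=
          Submodule.mem_map_of_mem hmem
        rw [h1, hπ₀VI (a k • x₂), h2] at h3
        exact h3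
      exact hfinal (hcon a' ha'rel k ↑x₂)

end ML

theorem stmt17 (F A : Type*) [Field F] [Ring A] [Algebra F A]
    [FiniteDimensional F A]
    (V : Type*) [AddCommGroup V] [Module A V] [Module F V]
    [IsScalarTower F A V] [FiniteDimensional F V]
    [IsSemisimpleModule A V]
    (n : ℕ) (v : Basis (Fin n) F V)
    (hF : (n : Cardinal) < Cardinal.mk F)
    (ℓ : ℕ) (u : Fin ℓ → V)
    (hnotmax : ∃ u' : Fin ℓ → V,
        Module.finrank F ((Submodule.span A (Set.range u)).restrictScalars F) <
          Module.finrank F ((Submodule.span A (Set.range u')).restrictScalars F)) :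
    ∃ (i : Fin ℓ) (j : Fin n) (bad : Finset F), bad.card ≤ n ∧
      ∀ ω : F, ω ∉ bad →
        Module.finrank F ((Submodule.span A (Set.range u)).restrictScalars F) <
          Module.finrank F ((Submodule.span A
            (Set.range (Function.update u i (u i + ω • v j)))).restrictScalars F) := by
  classical
  obtain ⟨u', hu'⟩ := hnotmax
  have hconv : ∀ t : Fin ℓ → V,
      Module.finrank F ((Submodule.span A (Set.range t)).restrictScalars F)
        = finrank F ↥(LinearMap.range (phiMap F A ℓ t)) := by
    intro t
    rw [range_phiMap]
  have hlt : finrank F ↥(LinearMap.range (phiMap F A ℓ u)) <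
      finrank F ↥(LinearMap.range (phiMap F A ℓ u')) := by
    rw [← hconv, ← hconv]
    exact hu'
  obtain ⟨a, harel, k, x, hx⟩ :=
    mainLemma (F := F) (A := A) ℓ (finrank F V) V le_rfl u u' hlt
  set W : Submodule A V := Submodule.span A (Set.range u) with hW
  have hWF : ∀ (c : F) (y : V), y ∈ W → c • y ∈ W := by
    intro c y hy
    have h1 : c • y = (c • (1:A)) • y := by rw [smul_assoc, one_smul]
    rw [h1]
    exact W.smul_mem _ hy
  have hj : ∃ j : Fin n, a k • v j ∉ W := by
    by_contra hall
    push_neg at hall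
    apply hx
    have hexp : a k • x = ∑ j, (v.repr x j) • (a k • v j) := by
      conv_lhs => rw [← v.sum_repr x]
      rw [Finset.smul_sum]
      exact Finset.sum_congr rfl fun j _ => smulFA _ _ _
    rw [hexp]
    exact Submodule.sum_mem _ fun j _ => hWF _ _ (hall j)
  obtain ⟨j, hjW⟩ := hj
  set ψ : (Fin ℓ → A) →ₗ[F] V :=
    phiMap F A ℓ (Function.update (0 : Fin ℓ → V) k (v j)) with hψdef
  have hψa : ∀ b : Fin ℓ → A, ψ b = b k • v j := by
    intro b
    rw [hψdef, phiMap_apply]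
    rw [Finset.sum_eq_single k]
    · rw [Function.update_self]
    · intro m _ hmk
      rw [Function.update_of_ne hmk]
      simp
    · intro h
      exact absurd (Finset.mem_univ k) h
  have hq : phiMap F A ℓ u a = 0 := by
    rw [phiMap_apply]
    exact harel
  have hψq : ψ a ∉ LinearMap.range (phiMap F A ℓ u) := by
    rw [hψa, range_phiMap]
    intro hmem
    exact hjW hmem
  obtain ⟨bad, hbadcard, hmain⟩ := pencil_lemma (phiMap F A ℓ u) ψ a hq hψq
  have hnV : finrank F V = n := by
    rw [finrank_eq_card_basis v, Fintype.card_fin]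
  refine ⟨k, j, bad, by omega, fun ω hω => ?_⟩
  rw [hconv, hconv]
  have hres := hmain ω hω
  have heq : phiMap F A ℓ u + ω • ψ
      = phiMap F A ℓ (Function.update u k (u k + ω • v j)) := by
    apply LinearMap.ext
    intro b
    rw [LinearMap.add_apply, LinearMap.smul_apply, hψa, phiMap_apply, phiMap_apply]
    have hterm : ∀ m : Fin ℓ, b m • (Function.update u k (u k + ω • v j)) m
        = b m • u m + (if m = k then ω • (b m • v j) else 0) := by
      intro m
      by_cases hmk : m = k
      · subst hmk
        rw [Function.update_self, if_pos rfl, smul_add]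
        congr 1
        exact smulFA ω (b m) (v j)
      · rw [Function.update_of_ne hmk, if_neg hmk, add_zero]
    rw [Finset.sum_congr rfl fun m _ => hterm m, Finset.sum_add_distrib]
    congr 1
    rw [Finset.sum_ite_eq' Finset.univ k (fun m => ω • (b m • v j))]
    simp
  rwa [heq] at hres
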